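/- Let A ⊆ ℕ be a finite alphabet with 0 ∈ A and let X ⊆ A^ℕ be a sofic subshift whose unique periodic point is 0^ω (a periodic point is y ∈ X with σᵖ(y) = y for some p ≥ 1). Then X is countable and has finite coding dimension, i.e., there exists d ∈ ℕ with Σx ≤ d for all x ∈ X. -/

import Mathlib

open scoped BigOperators

/-- A language is regular if it is accepted by a DFA with finitely many states. -/
def IsRegularLang {α : Type*} (L : Set (List α)) : Prop :=
  ∃ (σ : Type) (_ : Fintype σ) (M : DFA α σ), ∀ w : List α, w ∈ M.accepts ↔ w ∈ L

/-- Pad a word over `A` to length `M` by prepending the padding symbol `none`. -/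
def padOne {A : Type*} (M : ℕ) (w : List A) : List (Option A) :=
  List.replicate (M - w.length) none ++ w.map some

/-- The padded form of a `d`-tuple of words over `A`, as a word over `(A ∪ {#})^d`. -/
def padTuple {A : Type*} {d : ℕ} (ws : Fin d → List A) : List (Fin d → Option A) :=
  List.ofFn fun j : Fin (Finset.univ.sup fun i : Fin d => (ws i).length) =>
    fun i : Fin d =>
      (padOne (Finset.univ.sup fun i : Fin d => (ws i).length) (ws i)).getD j.val none

/-- An abstract numeration system over the alphabet `A`, encoded by the order isomorphism
`rep : ℕ → L ⊆ A*` enumerating its (infinite) language in increasing order. -/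
structure ANS (A : Type*) where
  rep : ℕ → List A
  inj : Function.Injective rep

/-- A set `Y ⊆ ℕ^d` is `S`-recognizable if the padded representations of its members form
a regular language. -/
def ANS.Recognizable {A : Type*} (S : ANS A) {d : ℕ} (Y : Set (Fin d → ℕ)) : Prop :=
  IsRegularLang { w : List (Fin d → Option A) | ∃ t ∈ Y, w = padTuple fun i => S.rep (t i) }

/-- An ANS is addable if the graph of addition is `S`-recognizable. -/
def ANS.Addable {A : Type*} (S : ANS A) : Prop :=
  S.Recognizable { t : Fin 3 → ℕ | t 0 + t 1 = t 2 }

/-- An ANS is comparable if the relation `≤` is `S`-recognizable. -/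
def ANS.Comparable {A : Type*} (S : ANS A) : Prop :=
  S.Recognizable { t : Fin 2 → ℕ | t 0 ≤ t 1 }

/-- An ANS is regular if `ℕ` (i.e. its language) is `S`-recognizable. -/
def ANS.IsRegularANS {A : Type*} (S : ANS A) : Prop :=
  S.Recognizable (Set.univ : Set (Fin 1 → ℕ))

/-- The unary ANS, with language `0*` ordered by length. -/
def unaryANS : ANS Unit where
  rep := fun n => List.replicate n ()
  inj := fun m n h => by simpa using congrArg List.length h

/-- `x` is `S`-automatic: some DFAO outputs `x n` on input `rep_S n`. -/
def SAutomatic {A C : Type*} (S : ANS A) (x : ℕ → C) : Prop :=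
  ∃ (Q : Type) (_ : Fintype Q) (M : DFA A Q) (τ : Q → C),
    ∀ n : ℕ, τ (M.eval (S.rep n)) = x n

/-- The shift map on one-sided infinite words. -/
def shiftMap {C : Type*} (x : ℕ → C) : ℕ → C := fun n => x (n + 1)

/-- The orbit closure of `x` (closure in the product topology over the discrete alphabet):
`y` belongs to it iff every finite prefix of `y` occurs in `x`. -/
def orbitClosure {C : Type*} (x : ℕ → C) : Set (ℕ → C) :=
  { y | ∀ n : ℕ, ∃ m : ℕ, ∀ i < n, y i = x (m + i) }

/-- A subshift: a shift-invariant subset of `C^ℕ` that is closed in the product topology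
over the discrete alphabet (expressed combinatorially). -/
def IsSubshift {C : Type*} (X : Set (ℕ → C)) : Prop :=
  (∀ x ∈ X, shiftMap x ∈ X) ∧
  ∀ y : ℕ → C, (∀ n : ℕ, ∃ x ∈ X, ∀ i < n, y i = x i) → y ∈ X

/-- The language of a set of infinite words: all finite factors of its elements. -/
def LangOf {C : Type*} (X : Set (ℕ → C)) : Set (List C) :=
  { w | ∃ x ∈ X, ∃ p : ℕ, w = List.ofFn fun i : Fin w.length => x (p + i) }

/-- A word is right special in (the language of) `X` if it has two distinct one-letter
extensions in the language of `X`. -/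
def RightSpecial {C : Type*} (X : Set (ℕ → C)) (w : List C) : Prop :=
  ∃ a b : C, a ≠ b ∧ w ++ [a] ∈ LangOf X ∧ w ++ [b] ∈ LangOf X

/-- The factor complexity of `x`: the number of distinct factors of length `n`. -/
noncomputable def factorComplexity {C : Type*} (x : ℕ → C) (n : ℕ) : ℕ :=
  Set.ncard { w : List C | ∃ p : ℕ, w = List.ofFn fun i : Fin n => x (p + i) }

/-- `T` is a strategy tree witnessing `α ∈ W(X)`: a prefix-closed set of finite words
containing the empty word, in which every word of length `i` has exactly `α i + 1`
one-letter extensions, and all whose infinite branches lie in `X`. -/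
def IsStrategyTree {C : Type*} (X : Set (ℕ → C)) (α : ℕ → ℕ) (T : Set (List C)) : Prop :=
  ([] : List C) ∈ T ∧
  (∀ u v : List C, u ++ v ∈ T → u ∈ T) ∧
  (∀ w ∈ T, Set.ncard { c : C | w ++ [c] ∈ T } = α w.length + 1) ∧
  (∀ y : ℕ → C, (∀ n : ℕ, (List.ofFn fun i : Fin n => y i) ∈ T) → y ∈ X)

/-- The winning shift of `X ⊆ C^ℕ`, a subset of `ℕ^ℕ`. -/
def winningShift {C : Type*} (X : Set (ℕ → C)) : Set (ℕ → ℕ) :=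
  { α | ∃ T : Set (List C), IsStrategyTree X α T }

/-- Membership in the winning set of a set `X` of finite words, defined recursively:
`ε ∈ W(X)` iff `ε ∈ X`, and `a :: α ∈ W(X)` iff there is a set of `a + 1` letters `c`
such that `α` is in the winning set of the left quotient of `X` by `c`. -/
def winningSetMem {C : Type*} : List ℕ → Set (List C) → Prop
  | [], X => [] ∈ X
  | a :: α, X => ∃ S : Finset C, S.card = a + 1 ∧ ∀ c ∈ S, winningSetMem α { w | c :: w ∈ X }

/-- `Σ y = m`: the sum of the letters of `y ∈ ℕ^ℕ` is finite and equals `m`. -/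
def sumEq (y : ℕ → ℕ) (m : ℕ) : Prop :=
  (Function.support y).Finite ∧ ∑ᶠ i, y i = m

/-- `Y ⊆ ℕ^ℕ` has finite coding dimension: the sums `Σ y`, `y ∈ Y`, are uniformly bounded. -/
def FiniteCodingDim (Y : Set (ℕ → ℕ)) : Prop :=
  ∃ d : ℕ, ∀ y ∈ Y, ∀ F : Finset ℕ, ∑ i ∈ F, y i ≤ d

/-- The set `{ν(y) : y ∈ Y, Σy = k} ⊆ ℕᵏ`: nondecreasing `k`-tuples `t` such that the word
whose letter at `j` is the number of occurrences of `j` in `t` belongs to `Y`. -/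
def nuSet (Y : Set (ℕ → ℕ)) (k : ℕ) : Set (Fin k → ℕ) :=
  { t | Monotone t ∧ (fun j => Set.ncard { i : Fin k | t i = j }) ∈ Y }

/-- `Y ⊆ ℕ^ℕ` is weakly `S`-codable if `{ν(y) : y ∈ Y, Σy = k}` is `S`-recognizable for
every `k`. -/
def WeaklySCodable {A : Type*} (S : ANS A) (Y : Set (ℕ → ℕ)) : Prop :=
  ∀ k : ℕ, S.Recognizable (nuSet Y k)

/-- `Y ⊆ ℕ^ℕ` is `S`-codable if it is weakly `S`-codable and has finite coding dimension. -/
def SCodable {A : Type*} (S : ANS A) (Y : Set (ℕ → ℕ)) : Prop :=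
  WeaklySCodable S Y ∧ FiniteCodingDim Y

/-- `P_{111}(Y)`: strictly increasing triples `(a, b, c)` such that the word with letter `1`
exactly at positions `a`, `b`, `c` and `0` elsewhere belongs to `Y`. -/
def P111 (Y : Set (ℕ → ℕ)) : Set (Fin 3 → ℕ) :=
  { t | t 0 < t 1 ∧ t 1 < t 2 ∧
        (fun j => if j = t 0 ∨ j = t 1 ∨ j = t 2 then 1 else 0) ∈ Y }

/-- `P_v(Y)` for a finite word `v` over `ℕ`: strictly increasing tuples `n` such that the
word with letter `v i` at position `n i` and `0` elsewhere belongs to `Y`. -/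
def PvSet (v : List ℕ) (Y : Set (ℕ → ℕ)) : Set (Fin v.length → ℕ) :=
  { n | StrictMono n ∧
        (fun j => ∑ i : Fin v.length, if n i = j then v.get i else 0) ∈ Y }

/-- `X` is sofic: the set of label sequences of right-infinite paths in a finite
edge-labeled graph. -/
def IsSofic {C : Type*} (X : Set (ℕ → C)) : Prop :=
  ∃ (V : Type) (_ : Fintype V) (E : Set (V × C × V)),
    X = { x | ∃ p : ℕ → V, ∀ n : ℕ, (p n, x n, p (n + 1)) ∈ E }

/-- The factor `x[a..b-1]` of an infinite word. -/
def segmentOf {C : Type*} (x : ℕ → C) (a b : ℕ) : List C :=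
  List.ofFn fun i : Fin (b - a) => x (a + i)

/-- `U · V^ω`: infinite words that decompose as a word of `U` followed by infinitely many
nonempty words of `V`. -/
def omegaIter {C : Type*} (U V : Set (List C)) : Set (ℕ → C) :=
  { x | ∃ k : ℕ → ℕ, StrictMono k ∧ segmentOf x 0 (k 0) ∈ U ∧
        ∀ i : ℕ, segmentOf x (k i) (k (i + 1)) ∈ V }

/-- `X ⊆ C^ℕ` is ω-regular: a finite union of sets `U · V^ω` with `U`, `V` regular. -/
def IsOmegaRegular {C : Type*} (X : Set (ℕ → C)) : Prop :=
  ∃ (n : ℕ) (U V : Fin n → Set (List C)),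
    (∀ i, IsRegularLang (U i) ∧ IsRegularLang (V i)) ∧
    X = ⋃ i, omegaIter (U i) (V i)

/-- The words `p₁ = a`, `p_{k+1} = p_k bᵏ p_k` (with `a = false`, `b = true`). -/
def pWord : ℕ → List Bool
  | 0 => []
  | 1 => [false]
  | (k + 2) => pWord (k + 1) ++ List.replicate (k + 1) true ++ pWord (k + 1)

/-- Combinatorial continuity of `φ` on `Y` for product topologies over discrete alphabets:
every finite prefix of `φ y` is determined by a finite prefix of `y`. -/
def ContOn {B C : Type*} (φ : (ℕ → B) → (ℕ → C)) (Y : Set (ℕ → B)) : Prop :=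
  ∀ y ∈ Y, ∀ n : ℕ, ∃ m : ℕ, ∀ y' ∈ Y, (∀ i < m, y' i = y i) → ∀ i < n, φ y' i = φ y i

/-- Reachability along labeled edges. -/
def Reaches {V : Type*} (E : Set (V × ℕ × V)) (v w : V) : Prop :=
  ∃ k : ℕ, ∃ q : ℕ → V, ∃ ls : ℕ → ℕ,
    q 0 = v ∧ q k = w ∧ ∀ i < k, (q i, ls i, q (i + 1)) ∈ E

lemma reaches_refl {V : Type*} (E : Set (V × ℕ × V)) (v : V) : Reaches E v v :=
  ⟨0, fun _ => v, fun _ => 0, rfl, rfl, fun i hi => absurd hi (Nat.not_lt_zero i)⟩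

lemma reaches_cons {V : Type*} {E : Set (V × ℕ × V)} {v w u : V} {c : ℕ}
    (he : (v, c, w) ∈ E) (h : Reaches E w u) : Reaches E v u := by
  obtain ⟨k, q, ls, h0, hk, hE⟩ := h
  refine ⟨k + 1, fun i => Nat.casesOn i v q, fun i => Nat.casesOn i c ls, rfl, hk, ?_⟩
  intro i hi
  cases i with
  | zero =>
    show (v, c, q 0) ∈ E
    rw [h0]; exact he
  | succ j =>
    show (q j, ls j, q (j + 1)) ∈ E
    exact hE j (by omega)

lemma shift_iter (p : ℕ) : ∀ (y : ℕ → ℕ) (n : ℕ), (shiftMap^[p] y) n = y (n + p) := by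
  induction p with
  | zero => intro y n; simp
  | succ m ih =>
    intro y n
    rw [Function.iterate_succ_apply]
    rw [ih (shiftMap y) n]
    rfl

lemma add_one_mod_helper (n L : ℕ) : (n + 1) % L = (n % L + 1) % L := by
  conv_lhs => rw [Nat.add_mod]
  conv_rhs => rw [Nat.add_mod, Nat.mod_mod]

lemma cycleZero {V : Type} (E : Set (V × ℕ × V)) (X : Set (ℕ → ℕ))
    (hX : X = { x | ∃ p : ℕ → V, ∀ n : ℕ, (p n, x n, p (n + 1)) ∈ E })
    (huniq : ∀ y : ℕ → ℕ,
      (y ∈ X ∧ ∃ p : ℕ, 1 ≤ p ∧ shiftMap^[p] y = y) ↔ y = fun _ => 0)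
    {v w : V} {c : ℕ} (he : (v, c, w) ∈ E) (hr : Reaches E w v) : c = 0 := by
  obtain ⟨k, q, ls, h0, hk, hE⟩ := hr
  set L := k + 1 with hL
  set x : ℕ → ℕ := fun n => if n % L = k then c else ls (n % L) with hxdef
  set p : ℕ → V := fun n => q (n % L) with hpdef
  have hLpos : 0 < L := by omega
  have hmem : x ∈ X := by
    rw [hX]
    refine ⟨p, fun n => ?_⟩
    have hm : n % L < L := Nat.mod_lt _ hLpos
    have hsucc : (n + 1) % L = (n % L + 1) % L := add_one_mod_helper n L
    by_cases h : n % L = k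
    · have h1 : (n + 1) % L = 0 := by rw [hsucc, h]; simp [hL]
      show (q (n % L), x n, q ((n + 1) % L)) ∈ E
      rw [h, h1, hk, h0]
      have : x n = c := by simp [hxdef, h]
      rw [this]; exact he
    · have hlt : n % L < k := by omega
      have h1 : (n + 1) % L = n % L + 1 := by
        rw [hsucc]; exact Nat.mod_eq_of_lt (by omega)
      show (q (n % L), x n, q ((n + 1) % L)) ∈ E
      rw [h1]
      have : x n = ls (n % L) := by simp [hxdef, h]
      rw [this]
      exact hE _ hlt
  have hper : shiftMap^[L] x = x := by
    funext n
    rw [shift_iter]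
    show (if (n + L) % L = k then c else ls ((n + L) % L)) = _
    rw [Nat.add_mod_right]
  have hx0 : x = fun _ => 0 := (huniq x).mp ⟨hmem, L, by omega, hper⟩
  have := congrFun hx0 k
  simpa [hxdef, Nat.mod_eq_of_lt (show k < L by omega)] using this

/-- A sofic subshift over a finite alphabet `A ⊆ ℕ` containing `0` whose
unique periodic point is `0^ω` is countable and has finite coding dimension. -/
theorem stmt14 (A : Finset ℕ) (h0 : (0 : ℕ) ∈ A) (X : Set (ℕ → ℕ))
    (hsub : IsSubshift X) (hA : ∀ x ∈ X, ∀ n : ℕ, x n ∈ A)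
    (hsofic : IsSofic X)
    (huniq : ∀ y : ℕ → ℕ,
      (y ∈ X ∧ ∃ p : ℕ, 1 ≤ p ∧ shiftMap^[p] y = y) ↔ y = fun _ => 0) :
    X.Countable ∧ FiniteCodingDim X := by
  obtain ⟨V, hV, E, hX⟩ := hsofic
  haveI := hV
  set N := Fintype.card V with hN
  -- Key claim: every element of X has at most N+1 nonzero positions
  have key : ∀ x ∈ X, ∃ s : Finset ℕ, (∀ n, x n ≠ 0 → n ∈ s) ∧ s.card ≤ N + 1 := by
    intro x hx
    have hx' : ∃ p : ℕ → V, ∀ n : ℕ, (p n, x n, p (n + 1)) ∈ E := by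
      rw [hX] at hx; exact hx
    obtain ⟨p, hp⟩ := hx'
    set g : ℕ → ℕ := fun n => Set.ncard { u | Reaches E (p n) u } with hg
    have gstep : ∀ n, { u | Reaches E (p (n + 1)) u } ⊆ { u | Reaches E (p n) u } :=
      fun n u hu => reaches_cons (hp n) hu
    have gbound : ∀ n, g n ≤ N := by
      intro n
      have h1 : Set.ncard { u | Reaches E (p n) u } ≤ Set.ncard (Set.univ : Set V) :=
        Set.ncard_le_ncard (Set.subset_univ _) Set.finite_univ
      rwa [Set.ncard_univ, Nat.card_eq_fintype_card] at h1
    have gmono : ∀ d n, g (n + d) ≤ g n := by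
      intro d
      induction d with
      | zero => intro n; exact le_refl _
      | succ m ih =>
        intro n
        have h1 : g (n + (m + 1)) ≤ g (n + 1) := by
          have := ih (n + 1)
          have he : n + 1 + m = n + (m + 1) := by omega
          rwa [he] at this
        exact h1.trans (Set.ncard_le_ncard (gstep n) (Set.toFinite _))
    have gdrop : ∀ n, x n ≠ 0 → g (n + 1) < g n := by
      intro n hn
      refine Set.ncard_lt_ncard ?_ (Set.toFinite _)
      rw [Set.ssubset_iff_of_subset (gstep n)]
      refine ⟨p n, reaches_refl E (p n), fun hr => ?_⟩
      exact hn (cycleZero E X hX huniq (hp n) hr)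
    have hstrict : ∀ n m, n < m → x n ≠ 0 → g m < g n := by
      intro n m hnm hn
      have h1 : g m ≤ g (n + 1) := by
        have := gmono (m - (n + 1)) (n + 1)
        have he : n + 1 + (m - (n + 1)) = m := by omega
        rwa [he] at this
      exact h1.trans_lt (gdrop n hn)
    have hinj : Set.InjOn g (Function.support x) := by
      intro n hn m hm hgnm
      by_contra hne
      rcases lt_or_gt_of_ne hne with h | h
      · exact absurd hgnm (hstrict n m h hn).ne'
      · exact absurd hgnm (hstrict m n h hm).ne
    have hfin : (Function.support x).Finite := by
      refine Set.Finite.of_finite_image ?_ hinj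
      refine Set.Finite.subset (Set.finite_Iic N) ?_
      rintro _ ⟨n, -, rfl⟩
      exact gbound n
    refine ⟨hfin.toFinset, fun n hn => hfin.mem_toFinset.mpr hn, ?_⟩
    have : hfin.toFinset.card ≤ (Finset.range (N + 1)).card := by
      refine Finset.card_le_card_of_injOn g ?_ ?_
      · intro a ha
        rw [Finset.mem_coe, Finset.mem_range]
        exact Nat.lt_succ_of_le (gbound a)
      · intro a ha b hb
        exact hinj (hfin.mem_toFinset.mp ha) (hfin.mem_toFinset.mp hb)
    simpa using this
  constructor
  · -- countability
    have hsub' : X ⊆ Set.range ((↑) : (ℕ →₀ ℕ) → (ℕ → ℕ)) := by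
      intro x hx
      obtain ⟨s, hs, -⟩ := key x hx
      have hfin : (Function.support x).Finite :=
        Set.Finite.subset s.finite_toSet (fun n hn => hs n hn)
      exact ⟨Finsupp.ofSupportFinite x hfin, rfl⟩
    exact Set.Countable.mono hsub' (Set.countable_range _)
  · -- finite coding dimension
    refine ⟨(N + 1) * A.sup id, fun y hy F => ?_⟩
    obtain ⟨s, hs, hcard⟩ := key y hy
    have hflt : F.filter (fun i => y i ≠ 0) ⊆ s := by
      intro i hi
      rw [Finset.mem_filter] at hi
      exact hs i hi.2
    calc ∑ i ∈ F, y i = ∑ i ∈ F.filter (fun i => y i ≠ 0), y i :=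
          (Finset.sum_filter_ne_zero F).symm
      _ ≤ ∑ i ∈ s, y i := Finset.sum_le_sum_of_subset hflt
      _ ≤ s.card • A.sup id := by
          refine Finset.sum_le_card_nsmul s y _ fun i _ => ?_
          exact Finset.le_sup (f := id) (hA y hy i)
      _ = s.card * A.sup id := by rw [smul_eq_mul]
      _ ≤ (N + 1) * A.sup id := Nat.mul_le_mul_right _ hcard
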